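/- Let λ, L, μ > 0 and let f : R^n → R be differentiable. A point x is a solution of min_z λ‖z‖₀ + (L/2)‖z − y + ∇f(y)/L‖² + (μ/2)‖z − y‖² if and only if x ∈ H_γ(y − ∇f(y)/(L+μ)) where γ = sqrt(2λ/(L+μ)) and H_γ is the set-valued hard thresholding operator. -/

import Mathlib

open scoped Classical

/-- `‖x‖₀`: the number of nonzero components of `x`. -/
noncomputable def norm0 {n : ℕ} (x : EuclideanSpace ℝ (Fin n)) : ℕ :=
  (Finset.univ.filter fun i => x i ≠ 0).card

/-- Membership in the set-valued hard thresholding operator `H_γ(c)`. -/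
def memHardThresh {n : ℕ} (γ : ℝ) (c x : EuclideanSpace ℝ (Fin n)) : Prop :=
  ∀ i : Fin n,
    (γ < |c i| → x i = c i) ∧
    (|c i| = γ → x i = 0 ∨ x i = c i) ∧
    (|c i| < γ → x i = 0)

/-- One-dimensional hard-thresholding characterization. -/
lemma per_coord (lam s c x γ : ℝ) (hlam : 0 < lam) (hs : 0 < s)
    (hγ : γ = Real.sqrt (lam / s)) :
    (∀ t : ℝ, (if x ≠ 0 then lam else 0) + s * (x - c) ^ 2
        ≤ (if t ≠ 0 then lam else 0) + s * (t - c) ^ 2)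
    ↔ ((γ < |c| → x = c) ∧ (|c| = γ → x = 0 ∨ x = c) ∧ (|c| < γ → x = 0)) := by
  have hγ0 : 0 < γ := by
    rw [hγ]; exact Real.sqrt_pos.mpr (div_pos hlam hs)
  have hγ2 : s * γ ^ 2 = lam := by
    rw [hγ, Real.sq_sqrt (le_of_lt (div_pos hlam hs))]
    field_simp
  have habs : |c| ^ 2 = c ^ 2 := sq_abs c
  constructor
  · intro h
    refine ⟨?_, ?_, ?_⟩
    · intro hc
      have hc2 : γ ^ 2 < c ^ 2 := by nlinarith [abs_nonneg c]
      have hsc : lam < s * c ^ 2 := by nlinarith [mul_lt_mul_of_pos_left hc2 hs]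
      have hc0 : c ≠ 0 := by
        intro h0; rw [h0, abs_zero] at hc; linarith
      have h1 := h c
      rw [if_pos hc0] at h1
      by_cases hx : x = 0
      · exfalso
        rw [if_neg (by simp [hx]), hx] at h1
        nlinarith
      · rw [if_pos hx] at h1
        have h2 : (x - c) ^ 2 = 0 := le_antisymm (by nlinarith) (sq_nonneg _)
        have h3 := pow_eq_zero_iff (n := 2) (by norm_num) |>.mp h2
        linarith [sub_eq_zero.mp h3]
    · intro hc
      have hc2 : c ^ 2 = γ ^ 2 := by rw [← habs, hc]
      have hsc : s * c ^ 2 = lam := by rw [hc2, hγ2]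
      by_cases hx : x = 0
      · exact Or.inl hx
      · right
        have h1 := h 0
        rw [if_pos hx, if_neg (by simp)] at h1
        have h2 : (x - c) ^ 2 = 0 := le_antisymm (by nlinarith) (sq_nonneg _)
        have h3 := pow_eq_zero_iff (n := 2) (by norm_num) |>.mp h2
        linarith [sub_eq_zero.mp h3]
    · intro hc
      have hc2 : c ^ 2 < γ ^ 2 := by nlinarith [abs_nonneg c]
      have hsc : s * c ^ 2 < lam := by nlinarith [mul_lt_mul_of_pos_left hc2 hs]
      by_contra hx
      have h1 := h 0
      rw [if_pos hx, if_neg (by simp)] at h1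
      nlinarith [sq_nonneg (x - c)]
  · rintro ⟨h1, h2, h3⟩ t
    rcases lt_trichotomy γ |c| with hc | hc | hc
    · have hc2 : γ ^ 2 < c ^ 2 := by nlinarith [abs_nonneg c]
      have hsc : lam < s * c ^ 2 := by nlinarith [mul_lt_mul_of_pos_left hc2 hs]
      have hx := h1 hc
      have hc0 : c ≠ 0 := by
        intro h0; rw [h0, abs_zero] at hc; linarith
      rw [hx, if_pos hc0]
      by_cases ht : t = 0
      · rw [if_neg (by simp [ht]), ht]; nlinarith
      · rw [if_pos ht]; nlinarith [sq_nonneg (t - c)]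
    · have hc2 : c ^ 2 = γ ^ 2 := by rw [← habs, hc]
      have hsc : s * c ^ 2 = lam := by rw [hc2, hγ2]
      have hc0 : c ≠ 0 := by
        intro h0; rw [h0, abs_zero] at hc; linarith
      have hval : (if x ≠ 0 then lam else 0) + s * (x - c) ^ 2 = lam := by
        rcases h2 hc.symm with hx | hx
        · rw [hx, if_neg (by simp)]; nlinarith
        · rw [hx, if_pos hc0]; nlinarith
      rw [hval]
      by_cases ht : t = 0
      · rw [if_neg (by simp [ht]), ht]; nlinarith
      · rw [if_pos ht]; nlinarith [sq_nonneg (t - c)]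
    · have hc2 : c ^ 2 < γ ^ 2 := by nlinarith [abs_nonneg c]
      have hsc : s * c ^ 2 < lam := by nlinarith [mul_lt_mul_of_pos_left hc2 hs]
      have hx := h3 hc
      rw [hx, if_neg (by simp)]
      by_cases ht : t = 0
      · rw [if_neg (by simp [ht]), ht]
      · rw [if_pos ht]; nlinarith [sq_nonneg (t - c)]

theorem subproblem_solution_iff_hardThresh {n : ℕ}
    (f : EuclideanSpace ℝ (Fin n) → ℝ)
    (gradf : EuclideanSpace ℝ (Fin n) → EuclideanSpace ℝ (Fin n))
    (hf : ∀ z, HasGradientAt f (gradf z) z)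
    (lam L μ : ℝ) (hlam : 0 < lam) (hL : 0 < L) (hμ : 0 < μ)
    (y x : EuclideanSpace ℝ (Fin n)) :
    (∀ z : EuclideanSpace ℝ (Fin n),
        lam * (norm0 x : ℝ) + L / 2 * ‖x - y + (1 / L) • gradf y‖ ^ 2
          + μ / 2 * ‖x - y‖ ^ 2
        ≤ lam * (norm0 z : ℝ) + L / 2 * ‖z - y + (1 / L) • gradf y‖ ^ 2
          + μ / 2 * ‖z - y‖ ^ 2)
    ↔ memHardThresh (Real.sqrt (2 * lam / (L + μ)))
        (y - (1 / (L + μ)) • gradf y) x := by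
  have hLμ : 0 < L + μ := by linarith
  have hLμ0 : L + μ ≠ 0 := ne_of_gt hLμ
  have hL0 : L ≠ 0 := ne_of_gt hL
  set g : EuclideanSpace ℝ (Fin n) := gradf y with hgdef
  set φ : Fin n → ℝ → ℝ := fun i t =>
    (if t ≠ 0 then lam else 0) + L / 2 * (t - y i + (1 / L) * g i) ^ 2
      + μ / 2 * (t - y i) ^ 2 with hφ
  have hnorm0 : ∀ z : EuclideanSpace ℝ (Fin n),
      (norm0 z : ℝ) = ∑ i, if z i ≠ 0 then (1 : ℝ) else 0 := by
    intro z
    rw [norm0, Finset.card_filter]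
    push_cast
    rfl
  have hnormsq : ∀ v : EuclideanSpace ℝ (Fin n), ‖v‖ ^ 2 = ∑ i, (v i) ^ 2 := by
    intro v
    rw [EuclideanSpace.norm_eq, Real.sq_sqrt (by positivity)]
    simp [sq_abs]
  have hobj : ∀ z : EuclideanSpace ℝ (Fin n),
      lam * (norm0 z : ℝ) + L / 2 * ‖z - y + (1 / L) • g‖ ^ 2
          + μ / 2 * ‖z - y‖ ^ 2 = ∑ i, φ i (z i) := by
    intro z
    rw [hnorm0, hnormsq, hnormsq, Finset.mul_sum, Finset.mul_sum, Finset.mul_sum,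
      ← Finset.sum_add_distrib, ← Finset.sum_add_distrib]
    refine Finset.sum_congr rfl fun i _ => ?_
    have h1 : (z - y + (1 / L) • g) i = z i - y i + (1 / L) * g i := by
      simp [PiLp.add_apply, PiLp.sub_apply, PiLp.smul_apply, smul_eq_mul]
    have h2 : (z - y) i = z i - y i := by simp [PiLp.sub_apply]
    rw [h1, h2, hφ]
    by_cases h : z i = 0 <;> simp [h]
  have hsep :
      (∀ z : EuclideanSpace ℝ (Fin n), (∑ i, φ i (x i)) ≤ ∑ i, φ i (z i))
        ↔ ∀ i, ∀ t : ℝ, φ i (x i) ≤ φ i t := by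
    constructor
    · intro h i t
      have hz := h (WithLp.toLp 2 (Function.update x i t))
      simp only [WithLp.ofLp_toLp] at hz
      have key : ∀ j, φ j (Function.update x i t j)
          = Function.update (fun j => φ j (x j)) i (φ i t) j := by
        intro j
        by_cases hj : j = i
        · subst hj; simp
        · simp [Function.update_of_ne hj]
      rw [Finset.sum_congr rfl (fun j _ => key j),
        Finset.sum_update_of_mem (Finset.mem_univ i),
        Finset.sdiff_singleton_eq_erase] at hz
      have hsum := Finset.sum_erase_add Finset.univ (fun j => φ j (x j))
        (Finset.mem_univ i)
      linarith [hz, hsum]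
    · intro h z
      exact Finset.sum_le_sum fun i _ => h i (z i)
  set s : ℝ := (L + μ) / 2 with hsdef
  have hs : 0 < s := by positivity
  have hcc : ∀ i, (y - (1 / (L + μ)) • g) i = y i - (1 / (L + μ)) * g i := by
    intro i; simp [PiLp.sub_apply, PiLp.smul_apply, smul_eq_mul]
  have hquad : ∀ i (t : ℝ), φ i t
      = ((if t ≠ 0 then lam else 0) + s * (t - (y i - (1 / (L + μ)) * g i)) ^ 2)
        + ((g i) ^ 2 / (2 * L) - (g i) ^ 2 / (2 * (L + μ))) := by
    intro i t
    have key : L / 2 * (t - y i + (1 / L) * g i) ^ 2 + μ / 2 * (t - y i) ^ 2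
        = s * (t - (y i - (1 / (L + μ)) * g i)) ^ 2
          + ((g i) ^ 2 / (2 * L) - (g i) ^ 2 / (2 * (L + μ))) := by
      rw [hsdef]
      field_simp
      ring
    rw [hφ]
    simp only
    rw [add_assoc, key]
    ring
  have hγ : Real.sqrt (2 * lam / (L + μ)) = Real.sqrt (lam / s) := by
    congr 1
    rw [hsdef]
    field_simp
  rw [hobj, show (∀ z : EuclideanSpace ℝ (Fin n),
      (∑ i, φ i (x i)) ≤ lam * (norm0 z : ℝ) + L / 2 * ‖z - y + (1 / L) • g‖ ^ 2
        + μ / 2 * ‖z - y‖ ^ 2) ↔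
      (∀ z : EuclideanSpace ℝ (Fin n), (∑ i, φ i (x i)) ≤ ∑ i, φ i (z i)) from
    forall_congr' fun z => by rw [hobj], hsep]
  unfold memHardThresh
  refine forall_congr' fun i => ?_
  rw [hcc i, hγ]
  rw [← per_coord lam s (y i - (1 / (L + μ)) * g i) (x i)
    (Real.sqrt (lam / s)) hlam hs rfl]
  constructor
  · intro h t
    have := h t
    rw [hquad i (x i), hquad i t] at this
    linarith
  · intro h t
    rw [hquad i (x i), hquad i t]
    linarith [h t]
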